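/- Let E be the matrix E = [I_{J-1}; 0^T] − π̄·1_{J-1}^T with π_j > 0 summing to 1. Then E^T diag(π̄)^{-1} E is positive definite. -/

import Mathlib

open Matrix

/-- `Eᵀ diag(π̄)⁻¹ E` is positive definite. -/
theorem stmt4 (J : ℕ) (hJ : 2 ≤ J)
    (πbar : Fin J → ℝ) (hpos : ∀ j, 0 < πbar j) (hsum : ∑ j, πbar j = 1)
    (E : Matrix (Fin J) (Fin (J - 1)) ℝ)
    (hE : E = Matrix.of (fun (j : Fin J) (l : Fin (J - 1)) =>
      (if j = Fin.castLE (Nat.sub_le J 1) l then (1 : ℝ) else 0) - πbar j)) :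
    (Eᵀ * (Matrix.diagonal πbar)⁻¹ * E).PosDef := by
  have hπne : ∀ j, πbar j ≠ 0 := fun j => (hpos j).ne'
  have hDinv : (Matrix.diagonal πbar)⁻¹ = Matrix.diagonal (fun j => (πbar j)⁻¹) := by
    apply Matrix.inv_eq_left_inv
    rw [Matrix.diagonal_mul_diagonal]
    rw [show (fun j => (πbar j)⁻¹ * πbar j) = fun _ => (1:ℝ) from
      funext fun j => inv_mul_cancel₀ (hπne j)]
    exact Matrix.diagonal_one
  -- formula for E *ᵥ x
  have hmv : ∀ (x : Fin (J-1) → ℝ) (j : Fin J),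
      (E *ᵥ x) j = (∑ l, (if j = Fin.castLE (Nat.sub_le J 1) l then x l else 0))
        - πbar j * ∑ l, x l := by
    intro x j
    simp [hE, Matrix.mulVec, dotProduct, sub_mul, ite_mul,
      Finset.sum_sub_distrib, Finset.mul_sum]
  have hinj : ∀ x : Fin (J-1) → ℝ, E *ᵥ x = 0 → x = 0 := by
    intro x hx
    have hlt : J - 1 < J := by omega
    set jl : Fin J := ⟨J - 1, hlt⟩ with hjl
    have hne : ∀ l : Fin (J-1), jl ≠ Fin.castLE (Nat.sub_le J 1) l := by
      intro l h
      have : (J : ℕ) - 1 = (l : ℕ) := congrArg Fin.val h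
      omega
    have hsum0 : ∑ l, x l = 0 := by
      have h0 : (E *ᵥ x) jl = 0 := by rw [hx]; rfl
      rw [hmv x jl] at h0
      rw [Finset.sum_eq_zero (fun l _ => if_neg (hne l))] at h0
      have h1 : πbar jl * ∑ l, x l = 0 := by linarith
      exact (mul_eq_zero.mp h1).resolve_left (hπne jl)
    funext l0
    have h0 : (E *ᵥ x) (Fin.castLE (Nat.sub_le J 1) l0) = 0 := by rw [hx]; rfl
    rw [hmv, hsum0, mul_zero, sub_zero] at h0
    have hrw : (∑ l, (if Fin.castLE (Nat.sub_le J 1) l0 = Fin.castLE (Nat.sub_le J 1) l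
        then x l else 0)) = x l0 := by
      simp [(Fin.castLE_injective (Nat.sub_le J 1)).eq_iff]
    rw [hrw] at h0
    simpa using h0
  rw [Matrix.posDef_iff_dotProduct_mulVec]
  constructor
  · have hH : (Matrix.diagonal πbar)⁻¹.IsHermitian := by
      rw [hDinv]; exact Matrix.isHermitian_diagonal _
    have := Matrix.isHermitian_conjTranspose_mul_mul E hH
    simpa using this
  · intro x hx
    have hy : E *ᵥ x ≠ 0 := fun h => hx (hinj x h)
    set y := E *ᵥ x with hyd
    have hform : x ⬝ᵥ (Eᵀ * (Matrix.diagonal πbar)⁻¹ * E) *ᵥ x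
        = ∑ j, (πbar j)⁻¹ * (y j * y j) := by
      rw [hDinv, Matrix.mul_assoc, ← Matrix.mulVec_mulVec, ← Matrix.mulVec_mulVec,
        Matrix.dotProduct_mulVec, Matrix.vecMul_transpose]
      simp [dotProduct, Matrix.mulVec_diagonal, hyd]
      ring_nf
      exact Finset.sum_congr rfl (fun j _ => by ring)
    simp only [star_trivial]
    rw [hform]
    obtain ⟨j0, hj0⟩ : ∃ j, y j ≠ 0 := by
      by_contra h; push_neg at h; exact hy (funext h)
    apply Finset.sum_pos'
    · intro j _
      exact mul_nonneg (inv_nonneg.mpr (hpos j).le) (mul_self_nonneg _)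
    · exact ⟨j0, Finset.mem_univ _,
        mul_pos (inv_pos.mpr (hpos j0)) (mul_self_pos.mpr hj0)⟩
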